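/- For every integer d ≥ 2 and all reals γ > 0 and α > 0: lim_{κ→0⁺} ∫₀^∞ exp( −γ κ^{−d/2} G(√κ · u^{1/α}) ) du = ∫₀^∞ exp( −γ (κ_d/2) u^{d/α} ) du. -/

import Mathlib

open MeasureTheory Real Filter Topology

/-- `ω_k`, the surface area of the (k−1)-dimensional Euclidean unit sphere. -/
noncomputable def omegaS (k : ℕ) : ℝ := 2 * Real.pi ^ ((k : ℝ) / 2) / Real.Gamma ((k : ℝ) / 2)

/-- `κ_k`, the volume of the k-dimensional Euclidean unit ball. -/
noncomputable def kappaV (k : ℕ) : ℝ := omegaS k / k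

/-- `G(u) := κ_{d−1} ∫₀^u (2 e^{−t} (cosh u − cosh t))^{(d−1)/2} dt`. -/
noncomputable def Gfun (d : ℕ) (u : ℝ) : ℝ :=
  kappaV (d - 1) *
    ∫ t in (0:ℝ)..u, (2 * Real.exp (-t) * (Real.cosh u - Real.cosh t)) ^ (((d : ℝ) - 1) / 2)

lemma sinh_le_mul_cosh {m : ℝ} (hm : 0 ≤ m) : Real.sinh m ≤ m * Real.cosh m := by
  have key : MonotoneOn (fun x : ℝ => x * Real.cosh x - Real.sinh x) (Set.Ici 0) := by
    have hder : ∀ x : ℝ, HasDerivAt (fun x : ℝ => x * Real.cosh x - Real.sinh x)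
        (x * Real.sinh x) x := by
      intro x
      have h1 := (hasDerivAt_id x).mul (Real.hasDerivAt_cosh x)
      have h2 := h1.sub (Real.hasDerivAt_sinh x)
      exact h2.congr_deriv (by simp only [id_eq]; ring)
    apply monotoneOn_of_deriv_nonneg (convex_Ici 0)
    · exact (Continuous.continuousOn (by continuity))
    · intro x hx
      exact (hder x).differentiableAt.differentiableWithinAt
    · intro x hx
      rw [(hder x).deriv]
      simp only [Set.mem_Ioi, interior_Ici, Set.mem_Ioi] at hx
      have : 0 ≤ Real.sinh x := Real.sinh_nonneg_iff.2 hx.le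
      positivity
  have := key (Set.mem_Ici.2 le_rfl) (Set.mem_Ici.2 hm) hm
  simp at this
  linarith

lemma cosh_sub_cosh' (v t : ℝ) :
    Real.cosh v - Real.cosh t
      = 2 * Real.sinh ((v + t) / 2) * Real.sinh ((v - t) / 2) := by
  have h1 : v = (v + t) / 2 + (v - t) / 2 := by ring
  have h2 : t = (v + t) / 2 - (v - t) / 2 := by ring
  rw [h1, h2] at *
  rw [Real.cosh_add, Real.cosh_sub]
  ring

lemma cosh_diff_lb {t v : ℝ} (ht : 0 ≤ t) (htv : t ≤ v) :
    (v ^ 2 - t ^ 2) / 2 ≤ Real.cosh v - Real.cosh t := by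
  rw [cosh_sub_cosh' v t]
  have ha : (0:ℝ) ≤ (v + t) / 2 := by linarith
  have hb : (0:ℝ) ≤ (v - t) / 2 := by linarith
  have h1 : (v + t) / 2 ≤ Real.sinh ((v + t) / 2) := Real.self_le_sinh_iff.2 ha
  have h2 : (v - t) / 2 ≤ Real.sinh ((v - t) / 2) := Real.self_le_sinh_iff.2 hb
  nlinarith [Real.sinh_nonneg_iff.2 ha, Real.sinh_nonneg_iff.2 hb]

lemma cosh_diff_ub {t v : ℝ} (ht : 0 ≤ t) (htv : t ≤ v) :
    Real.cosh v - Real.cosh t ≤ (v ^ 2 - t ^ 2) / 2 * Real.cosh v ^ 2 := by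
  rw [cosh_sub_cosh' v t]
  have ha : (0:ℝ) ≤ (v + t) / 2 := by linarith
  have hb : (0:ℝ) ≤ (v - t) / 2 := by linarith
  have h1 : Real.sinh ((v + t) / 2) ≤ (v + t) / 2 * Real.cosh ((v + t) / 2) :=
    sinh_le_mul_cosh ha
  have h2 : Real.sinh ((v - t) / 2) ≤ (v - t) / 2 * Real.cosh ((v - t) / 2) :=
    sinh_le_mul_cosh hb
  have hc1 : Real.cosh ((v + t) / 2) ≤ Real.cosh v := by
    rw [Real.cosh_le_cosh]
    rw [abs_of_nonneg ha, abs_of_nonneg (by linarith : (0:ℝ) ≤ v)]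
    linarith
  have hc2 : Real.cosh ((v - t) / 2) ≤ Real.cosh v := by
    rw [Real.cosh_le_cosh]
    rw [abs_of_nonneg hb, abs_of_nonneg (by linarith : (0:ℝ) ≤ v)]
    linarith
  have hs1 : 0 ≤ Real.sinh ((v + t) / 2) := Real.sinh_nonneg_iff.2 ha
  have hs2 : 0 ≤ Real.sinh ((v - t) / 2) := Real.sinh_nonneg_iff.2 hb
  have hcp1 : 0 < Real.cosh ((v + t) / 2) := Real.cosh_pos ((v + t) / 2)
  have hcp2 : 0 < Real.cosh ((v - t) / 2) := Real.cosh_pos ((v - t) / 2)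
  have hcv : 0 < Real.cosh v := Real.cosh_pos v
  have m1 : Real.sinh ((v + t) / 2) * Real.sinh ((v - t) / 2)
      ≤ ((v + t) / 2 * Real.cosh ((v + t) / 2)) * ((v - t) / 2 * Real.cosh ((v - t) / 2)) :=
    mul_le_mul h1 h2 hs2 (by positivity)
  have m2 : ((v + t) / 2 * Real.cosh ((v + t) / 2)) * ((v - t) / 2 * Real.cosh ((v - t) / 2))
      ≤ ((v + t) / 2 * Real.cosh v) * ((v - t) / 2 * Real.cosh v) := by
    apply mul_le_mul
    · exact mul_le_mul_of_nonneg_left hc1 ha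
    · exact mul_le_mul_of_nonneg_left hc2 hb
    · positivity
    · positivity
  nlinarith [m1, m2]

lemma cosPow_integral (n : ℕ) :
    ∫ x in (0:ℝ)..(π/2), Real.cos x ^ n
      = Real.sqrt π * Real.Gamma (((n:ℝ)+1)/2) / (2 * Real.Gamma ((n:ℝ)/2 + 1)) := by
  induction n using Nat.twoStepInduction with
  | zero =>
    simp only [Nat.cast_zero, pow_zero, intervalIntegral.integral_const, smul_eq_mul,
      mul_one, sub_zero]
    rw [show ((0:ℝ)+1)/2 = 1/2 by norm_num, Real.Gamma_one_half_eq]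
    rw [show (0:ℝ)/2 + 1 = 1 by norm_num, Real.Gamma_one]
    rw [show Real.sqrt π * Real.sqrt π / (2 * 1) = Real.sqrt π * Real.sqrt π / 2 by ring,
      Real.mul_self_sqrt Real.pi_pos.le]
  | one =>
    simp only [Nat.cast_one, pow_one]
    rw [integral_cos, Real.sin_pi_div_two, Real.sin_zero]
    have h32 : Real.Gamma ((1:ℝ)/2 + 1) = (1/2) * Real.Gamma (1/2) :=
      Real.Gamma_add_one (by norm_num)
    rw [show ((1:ℝ)+1)/2 = 1 by norm_num, Real.Gamma_one]
    rw [show (1:ℝ)/2 + 1 = (1:ℝ)/2 + 1 from rfl, h32, Real.Gamma_one_half_eq]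
    have : Real.sqrt π ≠ 0 := by positivity
    field_simp
    norm_num
  | more n ih _ =>
    rw [integral_cos_pow]
    have hcos : Real.cos (π/2) = 0 := Real.cos_pi_div_two
    have hsin : Real.sin (0:ℝ) = 0 := Real.sin_zero
    rw [hcos, hsin, zero_pow (Nat.succ_ne_zero n), ih]
    have hG1 : Real.Gamma (((n:ℝ)+2+1)/2) = (((n:ℝ)+1)/2) * Real.Gamma (((n:ℝ)+1)/2) := by
      rw [show ((n:ℝ)+2+1)/2 = ((n:ℝ)+1)/2 + 1 by ring]
      exact Real.Gamma_add_one (by positivity)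
    have hG2 : Real.Gamma (((n:ℝ)+2)/2 + 1) = ((n:ℝ)/2 + 1) * Real.Gamma ((n:ℝ)/2 + 1) := by
      rw [show ((n:ℝ)+2)/2 + 1 = ((n:ℝ)/2 + 1) + 1 by ring]
      exact Real.Gamma_add_one (by positivity)
    have hGp1 : 0 < Real.Gamma (((n:ℝ)+1)/2) := Real.Gamma_pos_of_pos (by positivity)
    have hGp2 : 0 < Real.Gamma ((n:ℝ)/2 + 1) := Real.Gamma_pos_of_pos (by positivity)
    push_cast
    rw [hG1, hG2]
    have hn2 : ((n:ℝ) + 2) ≠ 0 := by positivity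
    field_simp
    ring

lemma continuous_rpow_const' {p : ℝ} (hp : 0 ≤ p) : Continuous fun x : ℝ => x ^ p :=
  continuous_iff_continuousAt.2 fun x => Real.continuousAt_rpow_const x p (Or.inr hp)

lemma sub_sq_rpow_eq (d : ℕ) (hd : 1 ≤ d) :
    ∫ s in (0:ℝ)..1, (1 - s^2) ^ (((d:ℝ)-1)/2) = ∫ x in (0:ℝ)..(π/2), Real.cos x ^ d := by
  have hp : (0:ℝ) < ((d:ℝ)-1)/2 + 1 := by
    have : (1:ℝ) ≤ (d:ℝ) := by exact_mod_cast hd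
    linarith
  have hg : Continuous fun s : ℝ => (1 - s^2) ^ (((d:ℝ)-1)/2) := by
    have hp' : (0:ℝ) ≤ ((d:ℝ)-1)/2 := by
      have : (1:ℝ) ≤ (d:ℝ) := by exact_mod_cast hd
      linarith
    exact (continuous_rpow_const' hp').comp (by continuity)
  have key := intervalIntegral.integral_comp_smul_deriv
    (a := 0) (b := π/2) (f := Real.sin) (f' := Real.cos)
    (fun x _ => Real.hasDerivAt_sin x) Real.continuous_cos.continuousOn hg
  rw [Real.sin_zero, Real.sin_pi_div_two] at key
  rw [← key]
  apply intervalIntegral.integral_congr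
  intro x hx
  rw [Set.uIcc_of_le (by positivity : (0:ℝ) ≤ π/2)] at hx
  have hcos : 0 ≤ Real.cos x := Real.cos_nonneg_of_mem_Icc
    ⟨by linarith [hx.1, Real.pi_pos], hx.2⟩
  simp only [Function.comp_apply, smul_eq_mul]
  have h1 : (1 : ℝ) - Real.sin x ^ 2 = Real.cos x ^ 2 := (Real.cos_sq' x).symm
  rw [h1]
  have h2 : (Real.cos x ^ 2 : ℝ) ^ (((d:ℝ)-1)/2) = Real.cos x ^ (d - 1) := by
    rw [← Real.rpow_natCast (Real.cos x) 2, ← Real.rpow_mul hcos,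
      show ((2:ℕ):ℝ) * (((d:ℝ)-1)/2) = ((d:ℝ)-1) by push_cast; ring,
      show ((d:ℝ)-1) = ((d - 1 : ℕ) : ℝ) by push_cast [Nat.cast_sub hd]; ring,
      Real.rpow_natCast]
  rw [h2, ← pow_succ' (Real.cos x) (d-1), Nat.sub_add_cancel hd]

lemma kappaV_eq (k : ℕ) (hk : 1 ≤ k) :
    kappaV k = π ^ ((k:ℝ)/2) / Real.Gamma ((k:ℝ)/2 + 1) := by
  unfold kappaV omegaS
  have hk' : (0:ℝ) < (k:ℝ) := by exact_mod_cast hk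
  have hG : 0 < Real.Gamma ((k:ℝ)/2) := Real.Gamma_pos_of_pos (by positivity)
  rw [Real.Gamma_add_one (by positivity : ((k:ℝ)/2) ≠ 0)]
  field_simp

lemma kappaV_pos (k : ℕ) (hk : 1 ≤ k) : 0 < kappaV k := by
  rw [kappaV_eq k hk]
  have h1 : 0 < π ^ ((k:ℝ)/2) := Real.rpow_pos_of_pos Real.pi_pos _
  have h2 : 0 < Real.Gamma ((k:ℝ)/2 + 1) := Real.Gamma_pos_of_pos (by positivity)
  positivity

lemma kappa_half_eq (d : ℕ) (hd : 2 ≤ d) :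
    kappaV (d-1) * ∫ s in (0:ℝ)..1, (1 - s^2) ^ (((d:ℝ)-1)/2) = kappaV d / 2 := by
  have hd1 : (1:ℕ) ≤ d - 1 := by omega
  have hcast : ((d - 1 : ℕ) : ℝ) = (d:ℝ) - 1 := by
    push_cast [Nat.cast_sub (by omega : 1 ≤ d)]; ring
  rw [sub_sq_rpow_eq d (by omega), cosPow_integral d, kappaV_eq (d-1) hd1, kappaV_eq d (by omega),
    hcast]
  have e1 : ((d:ℝ)-1)/2 + 1 = ((d:ℝ)+1)/2 := by ring
  rw [e1]
  have hG1 : 0 < Real.Gamma (((d:ℝ)+1)/2) := Real.Gamma_pos_of_pos (by positivity)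
  have hG2 : 0 < Real.Gamma ((d:ℝ)/2 + 1) := Real.Gamma_pos_of_pos (by positivity)
  have hsq : Real.sqrt π = π ^ ((1:ℝ)/2) := Real.sqrt_eq_rpow π
  have hpi : π ^ (((d:ℝ)-1)/2) * π ^ ((1:ℝ)/2) = π ^ ((d:ℝ)/2) := by
    rw [← Real.rpow_add Real.pi_pos]
    rw [show ((d:ℝ)-1)/2 + 1/2 = (d:ℝ)/2 by ring]
  rw [hsq]
  field_simp
  linear_combination hpi

lemma Gfun_integrand_cont (d : ℕ) (hd : 2 ≤ d) :
    Continuous (Function.uncurry fun (u t : ℝ) =>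
      (2 * Real.exp (-t) * (Real.cosh u - Real.cosh t)) ^ (((d : ℝ) - 1) / 2)) := by
  have hp : (0:ℝ) ≤ ((d:ℝ)-1)/2 := by
    have : (2:ℝ) ≤ (d:ℝ) := by exact_mod_cast hd
    linarith
  apply (continuous_rpow_const' hp).comp
  apply Continuous.mul
  · exact (continuous_const.mul ((Real.continuous_exp).comp (continuous_snd.neg)))
  · exact (Real.continuous_cosh.comp continuous_fst).sub (Real.continuous_cosh.comp continuous_snd)

lemma Gfun_continuous (d : ℕ) (hd : 2 ≤ d) : Continuous (Gfun d) := by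
  unfold Gfun
  exact continuous_const.mul
    (intervalIntegral.continuous_parametric_intervalIntegral_of_continuous
      (Gfun_integrand_cont d hd) continuous_id)

lemma sq_rpow_eq (d : ℕ) (hd : 1 ≤ d) {v : ℝ} (hv : 0 ≤ v) :
    (v^2) ^ (((d:ℝ)-1)/2) = v ^ (d-1) := by
  rw [← Real.rpow_natCast v 2, ← Real.rpow_mul hv,
    show ((2:ℕ):ℝ) * (((d:ℝ)-1)/2) = ((d:ℝ)-1) by push_cast; ring,
    show ((d:ℝ)-1) = ((d - 1 : ℕ) : ℝ) by push_cast [Nat.cast_sub hd]; ring,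
    Real.rpow_natCast]

lemma Gfun_lb_core (d : ℕ) (hd : 2 ≤ d) {v m : ℝ} (hm0 : 0 ≤ m) (hmv : 2*m ≤ v)
    (hm1 : m ≤ 1) :
    kappaV (d-1) * (m * ((3 / (4 * Real.exp 1)) ^ (((d:ℝ)-1)/2) * v ^ (d-1))) ≤ Gfun d v := by
  set p : ℝ := ((d:ℝ)-1)/2 with hpdef
  have hp : (0:ℝ) ≤ p := by
    have : (2:ℝ) ≤ (d:ℝ) := by exact_mod_cast hd
    simp only [hpdef]; linarith
  have hv : 0 ≤ v := by linarith
  have hk : 0 < kappaV (d-1) := kappaV_pos (d-1) (by omega)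
  set f : ℝ → ℝ := fun t => (2 * Real.exp (-t) * (Real.cosh v - Real.cosh t)) ^ p with hfdef
  have hfc : Continuous f := by
    apply (continuous_rpow_const' hp).comp
    continuity
  have hnonneg : ∀ t, 0 ≤ t → t ≤ v → 0 ≤ 2 * Real.exp (-t) * (Real.cosh v - Real.cosh t) := by
    intro t ht htv
    have : Real.cosh t ≤ Real.cosh v := by
      rw [Real.cosh_le_cosh, abs_of_nonneg ht, abs_of_nonneg hv]; exact htv
    have he : 0 < Real.exp (-t) := Real.exp_pos _
    nlinarith
  have step1 : ∫ t in (0:ℝ)..m, f t ≤ ∫ t in (0:ℝ)..v, f t := by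
    apply intervalIntegral.integral_mono_interval le_rfl hm0 (by linarith)
    · filter_upwards [MeasureTheory.ae_restrict_mem measurableSet_Ioc] with t ht
      exact Real.rpow_nonneg (hnonneg t ht.1.le ht.2) p
    · exact hfc.intervalIntegrable 0 v
  have step2 : m * ((3 / (4 * Real.exp 1)) ^ p * v ^ (d-1)) ≤ ∫ t in (0:ℝ)..m, f t := by
    have hconst : ∫ _t in (0:ℝ)..m, (3 / (4 * Real.exp 1)) ^ p * v ^ (d-1)
        = m * ((3 / (4 * Real.exp 1)) ^ p * v ^ (d-1)) := by
      rw [intervalIntegral.integral_const]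
      simp
    rw [← hconst]
    apply intervalIntegral.integral_mono_on hm0
    · exact continuous_const.intervalIntegrable 0 m
    · exact hfc.intervalIntegrable 0 m
    · intro t ht
      have ht0 : 0 ≤ t := ht.1
      have htm : t ≤ m := ht.2
      have hbase : 3 / (4 * Real.exp 1) * v^2
          ≤ 2 * Real.exp (-t) * (Real.cosh v - Real.cosh t) := by
        have he : Real.exp (-1:ℝ) ≤ Real.exp (-t) := Real.exp_le_exp.2 (by linarith)
        have hcosh : (v^2 - t^2)/2 ≤ Real.cosh v - Real.cosh t := cosh_diff_lb ht0 (by linarith)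
        have ht2 : t^2 ≤ v^2/4 := by nlinarith
        have h2 : (3:ℝ)/8 * v^2 ≤ Real.cosh v - Real.cosh t := by nlinarith
        have hmu : 2 * Real.exp (-1:ℝ) * ((3:ℝ)/8 * v^2)
            ≤ 2 * Real.exp (-t) * (Real.cosh v - Real.cosh t) :=
          mul_le_mul (by linarith) h2 (by positivity) (by positivity)
        have he1 : Real.exp (-1:ℝ) = (Real.exp 1)⁻¹ := Real.exp_neg 1
        have hepos : (0:ℝ) < Real.exp 1 := Real.exp_pos 1
        calc 3 / (4 * Real.exp 1) * v^2
            = 2 * (Real.exp 1)⁻¹ * ((3:ℝ)/8 * v^2) := by field_simp; ring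
          _ = 2 * Real.exp (-1:ℝ) * ((3:ℝ)/8 * v^2) := by rw [he1]
          _ ≤ _ := hmu
      calc (3 / (4 * Real.exp 1))^p * v^(d-1) = (3 / (4 * Real.exp 1) * v^2)^p := by
            rw [Real.mul_rpow (by positivity) (by positivity), sq_rpow_eq d (by omega) hv]
        _ ≤ f t := Real.rpow_le_rpow (by positivity) hbase hp
  calc kappaV (d-1) * (m * ((3 / (4 * Real.exp 1)) ^ p * v ^ (d-1)))
      ≤ kappaV (d-1) * ∫ t in (0:ℝ)..m, f t := by
        exact mul_le_mul_of_nonneg_left step2 hk.le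
    _ ≤ kappaV (d-1) * ∫ t in (0:ℝ)..v, f t := mul_le_mul_of_nonneg_left step1 hk.le
    _ = Gfun d v := rfl

lemma Gfun_lb (d : ℕ) (hd : 2 ≤ d) :
    ∃ c : ℝ, 0 < c ∧
      (∀ v : ℝ, 0 ≤ v → v ≤ 1 → c * v ^ d ≤ Gfun d v) ∧
      (∀ v : ℝ, 1 ≤ v → c * v ^ (d - 1) ≤ Gfun d v) := by
  set p : ℝ := ((d:ℝ)-1)/2 with hpdef
  have hp : (0:ℝ) ≤ p := by
    have : (2:ℝ) ≤ (d:ℝ) := by exact_mod_cast hd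
    simp only [hpdef]; linarith
  have hk : 0 < kappaV (d-1) := kappaV_pos (d-1) (by omega)
  set A : ℝ := (3 / (4 * Real.exp 1)) ^ p with hAdef
  have hA : 0 < A := Real.rpow_pos_of_pos (by positivity) _
  refine ⟨kappaV (d-1) * A / 2, by positivity, fun v hv1 hv2 => ?_, fun v hv1 => ?_⟩
  · have := Gfun_lb_core d hd (v := v) (m := v/2) (by linarith) (by linarith) (by linarith)
    have hvd : v ^ d = v ^ (d-1) * v := by
      conv_lhs => rw [← Nat.sub_add_cancel (show 1 ≤ d by omega)]
      rw [pow_succ]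
    calc kappaV (d-1) * A / 2 * v ^ d
        = kappaV (d-1) * (v/2 * (A * v ^ (d-1))) := by rw [hvd]; ring
      _ ≤ Gfun d v := this
  · have := Gfun_lb_core d hd (v := v) (m := 1/2) (by norm_num) (by linarith) (by norm_num)
    calc kappaV (d-1) * A / 2 * v ^ (d-1)
        = kappaV (d-1) * (1/2 * (A * v ^ (d-1))) := by ring
      _ ≤ Gfun d v := this

lemma key_limit (d : ℕ) (hd : 2 ≤ d) {x : ℝ} (hx : 0 < x) :
    Tendsto (fun κ : ℝ => κ ^ (-(d:ℝ)/2) * Gfun d (Real.sqrt κ * x)) (𝓝[>] (0:ℝ))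
      (𝓝 (kappaV d / 2 * x ^ d)) := by
  set p : ℝ := ((d:ℝ)-1)/2 with hpdef
  have hp : (0:ℝ) < p := by
    have : (2:ℝ) ≤ (d:ℝ) := by exact_mod_cast hd
    simp only [hpdef]; linarith
  have hk : 0 < kappaV (d-1) := kappaV_pos (d-1) (by omega)
  set base : ℝ → ℝ → ℝ := fun κ s =>
    κ⁻¹ * (2 * Real.exp (-(Real.sqrt κ * x * s)) *
      (Real.cosh (Real.sqrt κ * x) - Real.cosh (Real.sqrt κ * x * s))) with hbasedef
  -- Step 1: rewrite the function on Ioi 0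
  have main_eq : ∀ κ : ℝ, 0 < κ →
      κ ^ (-(d:ℝ)/2) * Gfun d (Real.sqrt κ * x)
        = kappaV (d-1) * x * ∫ s in (0:ℝ)..1, (base κ s) ^ p := by
    intro κ hκ
    have hsq : 0 < Real.sqrt κ := Real.sqrt_pos.2 hκ
    set c : ℝ := Real.sqrt κ * x with hcdef
    have hc : 0 < c := by positivity
    have hsub : (∫ t in (0:ℝ)..c,
          (2 * Real.exp (-t) * (Real.cosh c - Real.cosh t)) ^ p)
        = c * ∫ s in (0:ℝ)..1,
          (2 * Real.exp (-(c*s)) * (Real.cosh c - Real.cosh (c*s))) ^ p := by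
      have := intervalIntegral.integral_comp_mul_left
        (f := fun t => (2 * Real.exp (-t) * (Real.cosh c - Real.cosh t)) ^ p)
        (a := 0) (b := 1) (c := c) hc.ne'
      rw [mul_zero, mul_one] at this
      rw [this, smul_eq_mul, ← mul_assoc, mul_inv_cancel₀ hc.ne', one_mul]
    have hpow : κ ^ (-(d:ℝ)/2) * c = x * (κ⁻¹) ^ p := by
      rw [hcdef, Real.sqrt_eq_rpow, ← Real.rpow_neg_one κ, ← Real.rpow_mul hκ.le,
        ← mul_assoc, ← Real.rpow_add hκ]
      rw [show -(d:ℝ)/2 + 1/2 = (-1) * p by simp only [hpdef]; ring]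
      ring
    unfold Gfun
    rw [hsub]
    rw [show κ ^ (-(d:ℝ)/2) * (kappaV (d-1) *
        (c * ∫ s in (0:ℝ)..1, (2 * Real.exp (-(c*s)) * (Real.cosh c - Real.cosh (c*s))) ^ p))
      = kappaV (d-1) * ((κ ^ (-(d:ℝ)/2) * c) *
        ∫ s in (0:ℝ)..1, (2 * Real.exp (-(c*s)) * (Real.cosh c - Real.cosh (c*s))) ^ p) by ring,
      hpow]
    rw [mul_assoc, ← intervalIntegral.integral_const_mul, ← mul_assoc]
    congr 1
    apply intervalIntegral.integral_congr
    intro s hs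
    rw [Set.uIcc_of_le (zero_le_one)] at hs
    have hnn : 0 ≤ 2 * Real.exp (-(c*s)) * (Real.cosh c - Real.cosh (c*s)) := by
      have hcs : Real.cosh (c*s) ≤ Real.cosh c := by
        rw [Real.cosh_le_cosh, abs_of_nonneg (mul_nonneg hc.le hs.1),
          abs_of_nonneg hc.le]
        nlinarith [hs.1, hs.2]
      have := Real.exp_pos (-(c*s))
      nlinarith
    show κ⁻¹ ^ p * (2 * Real.exp (-(c * s)) * (Real.cosh c - Real.cosh (c * s))) ^ p
        = (base κ s) ^ p
    rw [← Real.mul_rpow (by positivity) hnn]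
  -- Step 2: the limit of the rewritten expression
  have hbase_nn : ∀ κ : ℝ, 0 < κ → ∀ s : ℝ, 0 ≤ s → s ≤ 1 → 0 ≤ base κ s := by
    intro κ hκ s hs0 hs1
    have hsq : 0 ≤ Real.sqrt κ := Real.sqrt_nonneg κ
    have hcs : Real.cosh (Real.sqrt κ * x * s) ≤ Real.cosh (Real.sqrt κ * x) := by
      rw [Real.cosh_le_cosh, abs_of_nonneg (by positivity), abs_of_nonneg (by positivity)]
      exact mul_le_of_le_one_right (by positivity) hs1
    have he := Real.exp_pos (-(Real.sqrt κ * x * s))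
    have hκi : 0 ≤ κ⁻¹ := by positivity
    rw [hbasedef]
    have : 0 ≤ 2 * Real.exp (-(Real.sqrt κ * x * s)) *
        (Real.cosh (Real.sqrt κ * x) - Real.cosh (Real.sqrt κ * x * s)) := by nlinarith
    exact mul_nonneg hκi this
  have hsandwich : ∀ κ : ℝ, 0 < κ → ∀ s : ℝ, 0 ≤ s → s ≤ 1 →
      Real.exp (-(Real.sqrt κ * x * s)) * (x^2*(1-s^2)) ≤ base κ s ∧
      base κ s ≤ Real.exp (-(Real.sqrt κ * x * s)) * (x^2*(1-s^2)) *
        Real.cosh (Real.sqrt κ * x) ^ 2 := by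
    intro κ hκ s hs0 hs1
    have hsq : 0 ≤ Real.sqrt κ := Real.sqrt_nonneg κ
    have ht0 : 0 ≤ Real.sqrt κ * x * s := by positivity
    have htv : Real.sqrt κ * x * s ≤ Real.sqrt κ * x :=
      mul_le_of_le_one_right (by positivity) hs1
    have hlb := cosh_diff_lb ht0 htv
    have hub := cosh_diff_ub ht0 htv
    have hv2 : (Real.sqrt κ * x)^2 = κ * x^2 := by
      rw [mul_pow, Real.sq_sqrt hκ.le]
    have ht2 : (Real.sqrt κ * x * s)^2 = κ * x^2 * s^2 := by
      rw [mul_pow, mul_pow, Real.sq_sqrt hκ.le]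
    rw [hv2, ht2] at hlb hub
    have he := Real.exp_pos (-(Real.sqrt κ * x * s))
    have hκi : 0 < κ⁻¹ := by positivity
    constructor
    · rw [hbasedef]
      have h1 : 2 * Real.exp (-(Real.sqrt κ * x * s)) * ((κ * x^2 - κ * x^2 * s^2)/2)
          ≤ 2 * Real.exp (-(Real.sqrt κ * x * s)) *
            (Real.cosh (Real.sqrt κ * x) - Real.cosh (Real.sqrt κ * x * s)) := by
        apply mul_le_mul_of_nonneg_left hlb (by positivity)
      calc Real.exp (-(Real.sqrt κ * x * s)) * (x^2*(1-s^2))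
          = κ⁻¹ * (2 * Real.exp (-(Real.sqrt κ * x * s)) * ((κ * x^2 - κ * x^2 * s^2)/2)) := by
            field_simp
        _ ≤ _ := mul_le_mul_of_nonneg_left h1 hκi.le
    · rw [hbasedef]
      have h1 : 2 * Real.exp (-(Real.sqrt κ * x * s)) *
            (Real.cosh (Real.sqrt κ * x) - Real.cosh (Real.sqrt κ * x * s))
          ≤ 2 * Real.exp (-(Real.sqrt κ * x * s)) *
            ((κ * x^2 - κ * x^2 * s^2)/2 * Real.cosh (Real.sqrt κ * x)^2) := by
        apply mul_le_mul_of_nonneg_left hub (by positivity)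
      calc κ⁻¹ * (2 * Real.exp (-(Real.sqrt κ * x * s)) *
            (Real.cosh (Real.sqrt κ * x) - Real.cosh (Real.sqrt κ * x * s)))
          ≤ κ⁻¹ * (2 * Real.exp (-(Real.sqrt κ * x * s)) *
            ((κ * x^2 - κ * x^2 * s^2)/2 * Real.cosh (Real.sqrt κ * x)^2)) :=
            mul_le_mul_of_nonneg_left h1 hκi.le
        _ = Real.exp (-(Real.sqrt κ * x * s)) * (x^2*(1-s^2)) *
            Real.cosh (Real.sqrt κ * x) ^ 2 := by
            field_simp
  have hlim_inner : Tendsto (fun κ => ∫ s in Set.Ioc (0:ℝ) 1, (base κ s) ^ p) (𝓝[>] (0:ℝ))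
      (𝓝 (∫ s in Set.Ioc (0:ℝ) 1, (x^2*(1-s^2)) ^ p)) := by
    apply MeasureTheory.tendsto_integral_filter_of_dominated_convergence
      (fun _ => (x^2 * Real.cosh x ^ 2) ^ p)
    · filter_upwards [self_mem_nhdsWithin] with κ hκ
      have : Continuous fun s => (base κ s) ^ p := by
        apply (continuous_rpow_const' hp.le).comp
        rw [hbasedef]
        apply continuous_const.mul
        apply Continuous.mul
        · exact continuous_const.mul
            (Real.continuous_exp.comp (continuous_const.mul continuous_id).neg)
        · exact continuous_const.sub
            (Real.continuous_cosh.comp (continuous_const.mul continuous_id))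
      exact this.aestronglyMeasurable.restrict
    · filter_upwards [Ioc_mem_nhdsGT zero_lt_one] with κ hκ
      rw [MeasureTheory.ae_restrict_iff' measurableSet_Ioc]
      apply MeasureTheory.ae_of_all
      intro s hs
      have h0 := hbase_nn κ hκ.1 s hs.1.le hs.2
      rw [Real.norm_eq_abs, abs_of_nonneg (Real.rpow_nonneg h0 p)]
      apply Real.rpow_le_rpow h0 _ hp.le
      have hub := (hsandwich κ hκ.1 s hs.1.le hs.2).2
      have hcx : Real.cosh (Real.sqrt κ * x) ≤ Real.cosh x := by
        rw [Real.cosh_le_cosh, abs_of_nonneg (by positivity), abs_of_nonneg hx.le]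
        nlinarith [Real.sqrt_le_one.2 hκ.2, Real.sqrt_nonneg κ]
      have hexp : Real.exp (-(Real.sqrt κ * x * s)) ≤ 1 := by
        rw [Real.exp_le_one_iff]
        have : 0 ≤ Real.sqrt κ * x * s := by
          have := Real.sqrt_nonneg κ
          have := hs.1.le
          positivity
        linarith
      have hch0 : 0 < Real.cosh (Real.sqrt κ * x) := Real.cosh_pos _
      have hchx : 0 < Real.cosh x := Real.cosh_pos x
      calc base κ s ≤ Real.exp (-(Real.sqrt κ * x * s)) * (x^2*(1-s^2)) *
            Real.cosh (Real.sqrt κ * x) ^ 2 := hub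
        _ ≤ 1 * (x^2 * 1) * Real.cosh x ^ 2 := by
            have hs2 : s^2 ≤ 1 := by nlinarith [hs.1, hs.2]
            have h12 : x^2*(1-s^2) ≤ x^2*1 := by nlinarith [sq_nonneg x]
            apply mul_le_mul
            · exact mul_le_mul hexp h12 (by nlinarith [sq_nonneg x]) zero_le_one
            · nlinarith
            · positivity
            · positivity
        _ = x^2 * Real.cosh x ^ 2 := by ring
    · exact MeasureTheory.integrable_const _
    · rw [MeasureTheory.ae_restrict_iff' measurableSet_Ioc]
      apply MeasureTheory.ae_of_all
      intro s hs
      have hL : Tendsto (fun κ : ℝ => Real.exp (-(Real.sqrt κ * x * s)) * (x^2*(1-s^2)))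
          (𝓝[>] (0:ℝ)) (𝓝 (x^2*(1-s^2))) := by
        have hc : Continuous fun κ : ℝ => Real.exp (-(Real.sqrt κ * x * s)) * (x^2*(1-s^2)) :=
          (Real.continuous_exp.comp
            (((Real.continuous_sqrt.mul continuous_const).mul continuous_const).neg)).mul
            continuous_const
        have := hc.tendsto' 0 (x^2*(1-s^2)) (by simp)
        exact this.mono_left nhdsWithin_le_nhds
      have hU : Tendsto (fun κ : ℝ => Real.exp (-(Real.sqrt κ * x * s)) * (x^2*(1-s^2)) *
          Real.cosh (Real.sqrt κ * x) ^ 2) (𝓝[>] (0:ℝ)) (𝓝 (x^2*(1-s^2))) := by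
        have hc : Continuous fun κ : ℝ => Real.exp (-(Real.sqrt κ * x * s)) * (x^2*(1-s^2)) *
            Real.cosh (Real.sqrt κ * x) ^ 2 :=
          ((Real.continuous_exp.comp
            (((Real.continuous_sqrt.mul continuous_const).mul continuous_const).neg)).mul
            continuous_const).mul
            ((Real.continuous_cosh.comp (Real.continuous_sqrt.mul continuous_const)).pow 2)
        have := hc.tendsto' 0 (x^2*(1-s^2)) (by simp)
        exact this.mono_left nhdsWithin_le_nhds
      have hsq : Tendsto (fun κ => base κ s) (𝓝[>] (0:ℝ)) (𝓝 (x^2*(1-s^2))) := by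
        apply tendsto_of_tendsto_of_tendsto_of_le_of_le' hL hU
        · filter_upwards [self_mem_nhdsWithin] with κ hκ
          exact (hsandwich κ hκ s hs.1.le hs.2).1
        · filter_upwards [self_mem_nhdsWithin] with κ hκ
          exact (hsandwich κ hκ s hs.1.le hs.2).2
      exact ((Real.continuousAt_rpow_const (x^2*(1-s^2)) p (Or.inr hp.le)).tendsto).comp hsq
  -- Step 3: identify the limit
  have hJ : ∫ s in Set.Ioc (0:ℝ) 1, (x^2*(1-s^2)) ^ p
      = x ^ (d-1) * ∫ s in (0:ℝ)..1, (1-s^2) ^ p := by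
    rw [← intervalIntegral.integral_of_le zero_le_one, ← intervalIntegral.integral_const_mul]
    apply intervalIntegral.integral_congr
    intro s hs
    rw [Set.uIcc_of_le zero_le_one] at hs
    have h1 : (0:ℝ) ≤ 1 - s^2 := by nlinarith [hs.1, hs.2]
    show (x^2*(1-s^2)) ^ p = x ^ (d-1) * (1-s^2) ^ p
    rw [Real.mul_rpow (by positivity) h1, sq_rpow_eq d (by omega) hx.le]
  have hfinal : kappaV (d-1) * x * (x ^ (d-1) * ∫ s in (0:ℝ)..1, (1-s^2) ^ p)
      = kappaV d / 2 * x ^ d := by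
    have hxd : x ^ d = x * x ^ (d-1) := by
      conv_lhs => rw [← Nat.sub_add_cancel (show 1 ≤ d by omega)]
      rw [pow_succ]
      ring
    rw [hxd, ← kappa_half_eq d hd]
    ring
  have htend : Tendsto (fun κ => kappaV (d-1) * x * ∫ s in (0:ℝ)..1, (base κ s) ^ p)
      (𝓝[>] (0:ℝ)) (𝓝 (kappaV d / 2 * x ^ d)) := by
    rw [← hfinal, ← hJ]
    have : (fun κ => kappaV (d-1) * x * ∫ s in (0:ℝ)..1, (base κ s) ^ p)
        = fun κ => kappaV (d-1) * x * ∫ s in Set.Ioc (0:ℝ) 1, (base κ s) ^ p := by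
      funext κ
      rw [intervalIntegral.integral_of_le zero_le_one]
    rw [this]
    exact tendsto_const_nhds.mul hlim_inner
  apply htend.congr'
  filter_upwards [self_mem_nhdsWithin] with κ hκ
  exact (main_eq κ hκ).symm

lemma integrable_exp_neg_mul_rpow' {b q : ℝ} (hb : 0 < b) (hq : 0 < q) :
    MeasureTheory.IntegrableOn (fun u : ℝ => Real.exp (-(b * u ^ q))) (Set.Ioi (0:ℝ)) := by
  have hs : (0:ℝ) < 1/q := by positivity
  have h1 : MeasureTheory.IntegrableOn (fun y : ℝ => Real.exp (-y) * y ^ (1/q - 1))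
      (Set.Ioi 0) := Real.GammaIntegral_convergent hs
  have h2 : MeasureTheory.IntegrableOn (fun y : ℝ => Real.exp (-(b*y)) * (b*y) ^ (1/q - 1))
      (Set.Ioi 0) := by
    have := (integrableOn_Ioi_comp_mul_left_iff
      (fun y : ℝ => Real.exp (-y) * y ^ (1/q - 1)) 0 hb).2
    rw [mul_zero] at this
    exact this h1
  have h3 : MeasureTheory.IntegrableOn
      (fun y : ℝ => y ^ (1/q - 1) * Real.exp (-(b*y))) (Set.Ioi 0) := by
    have h2' : MeasureTheory.IntegrableOn
        (fun y : ℝ => (b ^ (1/q - 1))⁻¹ * (Real.exp (-(b*y)) * (b*y) ^ (1/q - 1)))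
        (Set.Ioi 0) := h2.const_mul _
    apply h2'.congr_fun _ measurableSet_Ioi
    intro y hy
    have hy0 : (0:ℝ) < y := hy
    show (b ^ (1/q - 1))⁻¹ * (Real.exp (-(b*y)) * (b*y) ^ (1/q - 1))
        = y ^ (1/q - 1) * Real.exp (-(b*y))
    rw [Real.mul_rpow hb.le hy0.le]
    have hbp : (0:ℝ) < b ^ (1/q - 1) := Real.rpow_pos_of_pos hb _
    field_simp
  have key := (integrableOn_Ioi_comp_rpow_iff'
    (fun y : ℝ => y ^ (1/q - 1) * Real.exp (-(b*y))) (p := q) hq.ne').2 h3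
  apply key.congr_fun _ measurableSet_Ioi
  intro x hx
  have hx0 : (0:ℝ) < x := hx
  have hxq : (0:ℝ) < x ^ q := Real.rpow_pos_of_pos hx0 q
  show x ^ (q - 1) * ((x ^ q) ^ (1/q - 1) * Real.exp (-(b * x ^ q)))
      = Real.exp (-(b * x ^ q))
  rw [← Real.rpow_mul hx0.le q (1/q - 1),
    show q * (1/q - 1) = 1 - q by field_simp, ← mul_assoc,
    ← Real.rpow_add hx0, show q - 1 + (1 - q) = 0 by ring, Real.rpow_zero, one_mul]

/-- for every integer `d ≥ 2` and all reals `γ > 0`, `α > 0`,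
`lim_{κ→0⁺} ∫₀^∞ exp(−γ κ^{−d/2} G(√κ u^{1/α})) du = ∫₀^∞ exp(−γ (κ_d/2) u^{d/α}) du`. -/
theorem stmt6 (d : ℕ) (hd : 2 ≤ d) (γ α : ℝ) (hγ : 0 < γ) (hα : 0 < α) :
    Tendsto
      (fun κ : ℝ =>
        ∫ u in Set.Ioi (0:ℝ),
          Real.exp (-γ * κ ^ (-(d : ℝ) / 2) * Gfun d (Real.sqrt κ * u ^ (1 / α))))
      (nhdsWithin 0 (Set.Ioi 0))
      (nhds (∫ u in Set.Ioi (0:ℝ),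
        Real.exp (-γ * (kappaV d / 2) * u ^ ((d : ℝ) / α)))) := by
  obtain ⟨c, hcpos, hle1, hge1⟩ := Gfun_lb d hd
  have hrpow_cont : ContinuousOn (fun u : ℝ => u ^ (1/α)) (Set.Ioi 0) := fun u hu =>
    (Real.continuousAt_rpow_const u (1/α) (Or.inl (ne_of_gt hu))).continuousWithinAt
  apply MeasureTheory.tendsto_integral_filter_of_dominated_convergence
    (bound := fun u : ℝ => Real.exp (-(γ*c*u ^ ((d:ℝ)/α))) + Real.exp (-(γ*c*u ^ (((d:ℝ)-1)/α))))
  · filter_upwards [self_mem_nhdsWithin] with κ hκ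
    apply ContinuousOn.aestronglyMeasurable _ measurableSet_Ioi
    apply Real.continuous_exp.comp_continuousOn
    apply ContinuousOn.mul continuousOn_const
    exact (Gfun_continuous d hd).comp_continuousOn (continuousOn_const.mul hrpow_cont)
  · filter_upwards [Ioc_mem_nhdsGT zero_lt_one] with κ hκ
    rw [MeasureTheory.ae_restrict_iff' measurableSet_Ioi]
    apply MeasureTheory.ae_of_all
    intro u hu
    have hu0 : (0:ℝ) < u := hu
    set x : ℝ := u ^ (1/α) with hxdef
    have hx : 0 < x := Real.rpow_pos_of_pos hu0 _
    have hκ0 : (0:ℝ) < κ := hκ.1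
    have hsq : 0 < Real.sqrt κ := Real.sqrt_pos.2 hκ0
    set v : ℝ := Real.sqrt κ * x with hvdef
    have hv : 0 < v := by positivity
    have hκd : (0:ℝ) < κ ^ (-(d:ℝ)/2) := Real.rpow_pos_of_pos hκ0 _
    -- identities
    have hsqd : ∀ k : ℕ, (Real.sqrt κ) ^ k = κ ^ ((k:ℝ)/2) := by
      intro k
      rw [Real.sqrt_eq_rpow, ← Real.rpow_natCast (κ ^ ((1:ℝ)/2)) k, ← Real.rpow_mul hκ0.le]
      congr 1
      ring
    have hxd : ∀ k : ℕ, x ^ k = u ^ ((k:ℝ)/α) := by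
      intro k
      rw [hxdef, ← Real.rpow_natCast (u ^ ((1:ℝ)/α)) k, ← Real.rpow_mul hu0.le]
      congr 1
      ring
    have key : c * u ^ ((d:ℝ)/α) ≤ κ ^ (-(d:ℝ)/2) * Gfun d v ∨
        c * u ^ (((d:ℝ)-1)/α) ≤ κ ^ (-(d:ℝ)/2) * Gfun d v := by
      rcases le_or_gt v 1 with hv1 | hv1
      · left
        have hG := hle1 v hv.le hv1
        have h1 : κ ^ (-(d:ℝ)/2) * (c * v ^ d) ≤ κ ^ (-(d:ℝ)/2) * Gfun d v :=
          mul_le_mul_of_nonneg_left hG hκd.le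
        have h2 : κ ^ (-(d:ℝ)/2) * (c * v ^ d) = c * u ^ ((d:ℝ)/α) := by
          rw [hvdef, mul_pow, hsqd d, hxd d, ← mul_assoc, mul_comm (κ ^ (-(d:ℝ)/2)) c,
            mul_assoc, ← mul_assoc (κ ^ (-(d:ℝ)/2)), ← Real.rpow_add hκ0,
            show -(d:ℝ)/2 + (d:ℝ)/2 = 0 by ring, Real.rpow_zero]
          ring
        rw [← h2]
        exact h1
      · right
        have hG := hge1 v hv1.le
        have h1 : κ ^ (-(d:ℝ)/2) * (c * v ^ (d-1)) ≤ κ ^ (-(d:ℝ)/2) * Gfun d v :=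
          mul_le_mul_of_nonneg_left hG hκd.le
        have h2 : κ ^ (-(d:ℝ)/2) * (c * v ^ (d-1)) = κ ^ (-(1:ℝ)/2) * (c * u ^ (((d:ℝ)-1)/α)) := by
          rw [hvdef, mul_pow, hsqd (d-1), hxd (d-1),
            show (((d-1:ℕ)):ℝ) = (d:ℝ)-1 by push_cast [Nat.cast_sub (by omega : 1 ≤ d)]; ring]
          rw [show κ ^ (-(d:ℝ)/2) * (c * (κ ^ (((d:ℝ)-1)/2) * u ^ (((d:ℝ)-1)/α)))
            = (κ ^ (-(d:ℝ)/2) * κ ^ (((d:ℝ)-1)/2)) * (c * u ^ (((d:ℝ)-1)/α)) by ring,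
            ← Real.rpow_add hκ0, show -(d:ℝ)/2 + ((d:ℝ)-1)/2 = -(1:ℝ)/2 by ring]
        have h3 : (1:ℝ) ≤ κ ^ (-(1:ℝ)/2) :=
          Real.one_le_rpow_of_pos_of_le_one_of_nonpos hκ0 hκ.2 (by norm_num)
        have h4 : c * u ^ (((d:ℝ)-1)/α) ≤ κ ^ (-(1:ℝ)/2) * (c * u ^ (((d:ℝ)-1)/α)) :=
          le_mul_of_one_le_left
            (mul_nonneg hcpos.le (Real.rpow_pos_of_pos hu0 _).le) h3
        rw [← h2] at h4
        linarith
    have harg : Real.exp (-γ * κ ^ (-(d:ℝ)/2) * Gfun d (Real.sqrt κ * u ^ (1/α)))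
        ≤ Real.exp (-(γ*c*u ^ ((d:ℝ)/α))) + Real.exp (-(γ*c*u ^ (((d:ℝ)-1)/α))) := by
      rcases key with h | h
      · have : -γ * κ ^ (-(d:ℝ)/2) * Gfun d v ≤ -(γ*c*u ^ ((d:ℝ)/α)) := by nlinarith
        calc Real.exp (-γ * κ ^ (-(d:ℝ)/2) * Gfun d v) ≤ Real.exp (-(γ*c*u ^ ((d:ℝ)/α))) :=
              Real.exp_le_exp.2 this
          _ ≤ _ := le_add_of_nonneg_right (Real.exp_pos _).le
      · have : -γ * κ ^ (-(d:ℝ)/2) * Gfun d v ≤ -(γ*c*u ^ (((d:ℝ)-1)/α)) := by nlinarith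
        calc Real.exp (-γ * κ ^ (-(d:ℝ)/2) * Gfun d v) ≤ Real.exp (-(γ*c*u ^ (((d:ℝ)-1)/α))) :=
              Real.exp_le_exp.2 this
          _ ≤ _ := le_add_of_nonneg_left (Real.exp_pos _).le
    rw [Real.norm_eq_abs, abs_of_pos (Real.exp_pos _)]
    exact harg
  · have hd0 : (0:ℝ) < (d:ℝ) := by exact_mod_cast (show 0 < d by omega)
    have h2d : (2:ℝ) ≤ (d:ℝ) := by exact_mod_cast hd
    exact (integrable_exp_neg_mul_rpow' (by positivity) (div_pos hd0 hα)).add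
      (integrable_exp_neg_mul_rpow' (by positivity) (div_pos (by linarith) hα))
  · rw [MeasureTheory.ae_restrict_iff' measurableSet_Ioi]
    apply MeasureTheory.ae_of_all
    intro u hu
    have hu0 : (0:ℝ) < u := hu
    have hx : 0 < u ^ (1/α) := Real.rpow_pos_of_pos hu0 _
    have hk := key_limit d hd hx
    have hxd : (u ^ (1/α)) ^ d = u ^ ((d:ℝ)/α) := by
      rw [← Real.rpow_natCast (u ^ (1/α)) d, ← Real.rpow_mul hu0.le]
      congr 1
      ring
    have h1 : Tendsto (fun κ : ℝ => -γ * (κ ^ (-(d:ℝ)/2) * Gfun d (Real.sqrt κ * u ^ (1/α))))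
        (𝓝[>] (0:ℝ)) (𝓝 (-γ * (kappaV d / 2 * (u ^ (1/α)) ^ d))) :=
      (tendsto_const_nhds).mul hk
    have h2 := (Real.continuous_exp.tendsto _).comp h1
    have h3 : -γ * (kappaV d / 2 * (u ^ (1/α)) ^ d) = -γ * (kappaV d / 2) * u ^ ((d:ℝ)/α) := by
      rw [hxd]; ring
    rw [h3] at h2
    apply h2.congr
    intro κ
    simp only [Function.comp_apply]
    congr 1
    ring
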